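/- A topological space X is discrete if and only if X is sober and has a basis of atomic open subsets, i.e., every open set is a union of nonempty open sets that contain no proper nonempty open subset. -/

import Mathlib

/-- A topological space `X` is discrete iff it is sober and has a basis of atomic
open subsets, i.e. every open set is a union of nonempty open sets containing no
proper nonempty open subset. -/
theorem statement_15 {X : Type*} [TopologicalSpace X] :
    DiscreteTopology X ↔
    (T0Space X ∧ QuasiSober X ∧
      ∀ U : Set X, IsOpen U → ∃ 𝒜 : Set (Set X),
        (∀ A ∈ 𝒜, IsOpen A ∧ A.Nonempty ∧
          ∀ V : Set X, IsOpen V → V ⊆ A → V = ∅ ∨ V = A) ∧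
        U = ⋃₀ 𝒜) := by
  constructor
  · intro h
    haveI := h
    refine ⟨inferInstance, inferInstance, fun U hU => ?_⟩
    refine ⟨(fun x => ({x} : Set X)) '' U, ?_, ?_⟩
    · rintro A ⟨x, -, rfl⟩
      refine ⟨isOpen_discrete _, ⟨x, rfl⟩, fun V _ hV => ?_⟩
      rcases Set.subset_singleton_iff_eq.mp hV with h1 | h1 <;> [left; right] <;> exact h1
    · ext x
      simp
  · rintro ⟨hT0, hS, hB⟩
    rw [discreteTopology_iff_forall_isOpen]
    intro s
    -- It suffices that every singleton is open.
    have hsing : ∀ x : X, IsOpen ({x} : Set X) := by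
      intro x
      obtain ⟨𝒜, h𝒜, hU⟩ := hB Set.univ isOpen_univ
      have hx : x ∈ ⋃₀ 𝒜 := hU ▸ Set.mem_univ x
      obtain ⟨A, hA𝒜, hxA⟩ := hx
      obtain ⟨hAopen, hAne, hAatom⟩ := h𝒜 A hA𝒜
      -- A is irreducible
      have hirr : IsIrreducible A := by
        refine ⟨hAne, fun U V hUo hVo hU hV => ?_⟩
        have h1 : U ∩ A = A := by
          rcases hAatom (U ∩ A) (hUo.inter hAopen) Set.inter_subset_right with h | h
          · rw [Set.inter_comm] at h; exact absurd h (Set.nonempty_iff_ne_empty.mp hU)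
          · exact h
        have h2 : V ∩ A = A := by
          rcases hAatom (V ∩ A) (hVo.inter hAopen) Set.inter_subset_right with h | h
          · rw [Set.inter_comm] at h; exact absurd h (Set.nonempty_iff_ne_empty.mp hV)
          · exact h
        obtain ⟨a, ha⟩ := hAne
        have haU : a ∈ U ∩ A := by rw [h1]; exact ha
        have haV : a ∈ V ∩ A := by rw [h2]; exact ha
        exact ⟨a, ha, haU.1, haV.1⟩
      have hirrc : IsIrreducible (closure A) := hirr.closure
      obtain ⟨ξ, hξ⟩ := hS.sober hirrc isClosed_closure
      -- hξ : closure {ξ} = closure A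
      have hgen : closure ({ξ} : Set X) = closure A := hξ
      -- ξ ∈ A
      have hξA : ξ ∈ A := by
        have hxc : x ∈ closure ({ξ} : Set X) := hgen ▸ subset_closure hxA
        rcases mem_closure_iff.mp hxc A hAopen hxA with ⟨y, hyA, hy⟩
        rwa [Set.mem_singleton_iff.mp hy] at hyA
      -- every point of A equals ξ
      have key : ∀ a ∈ A, a = ξ := by
        intro a haA
        have h1 : a ∈ closure ({ξ} : Set X) := hgen ▸ subset_closure haA
        have h2 : ξ ∈ closure ({a} : Set X) := by
          rw [mem_closure_iff]
          intro W hWo hξW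
          have hWA : W ∩ A = A := by
            rcases hAatom (W ∩ A) (hWo.inter hAopen) Set.inter_subset_right with h | h
            · exact absurd h (Set.nonempty_iff_ne_empty.mp ⟨ξ, hξW, hξA⟩)
            · exact h
          have haW : a ∈ W ∩ A := by rw [hWA]; exact haA
          exact ⟨a, haW.1, rfl⟩
        have : Inseparable a ξ := by
          rw [inseparable_iff_closure_eq]
          exact subset_antisymm (closure_minimal (Set.singleton_subset_iff.mpr h1) isClosed_closure)
            (closure_minimal (Set.singleton_subset_iff.mpr h2) isClosed_closure)
        exact this.eq
      have hAx : A = {x} := by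
        have hxξ : x = ξ := key x hxA
        ext y
        constructor
        · intro hy; rw [Set.mem_singleton_iff, key y hy, hxξ]
        · intro hy; rwa [Set.mem_singleton_iff.mp hy]
      exact hAx ▸ hAopen
    have : s = ⋃ x ∈ s, ({x} : Set X) := by ext y; simp
    rw [this]
    exact isOpen_biUnion fun x _ => hsing x
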